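/- Let q be a prime power, let b, n, N, w be positive integers with b ≤ n, and let φ : F_q^b → F_q^N be an F_q-linear map such that wt_H(φ(a)) = w for every nonzero a ∈ F_q^b. Let C ⊆ F_q^n be an F_q-linear code, and let E(C) = { (φ(c̄_0), φ(c̄_1), …, φ(c̄_{n-1})) : c ∈ C } ⊆ F_q^{Nn}, where c̄_i = (c_i, …, c_{i+b-1}) with subscripts modulo n. Then for every nonnegative integer v, the number of codewords c ∈ C with wt_b(c) = v equals the number of codewords u ∈ E(C) with wt_H(u) = w·v. -/
import Mathlib


/-- The `b`-symbol weight of a vector `c ∈ F^n` (coordinates indexed cyclically by `ZMod n`). -/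
noncomputable def bWt {n : ℕ} {F : Type*} [Zero F] (b : ℕ) (c : ZMod n → F) : ℕ :=
  Nat.card {i : ZMod n | ∃ j < b, c (i + (j : ZMod n)) ≠ 0}

/-- The Hamming weight of a vector: its number of nonzero coordinates. -/
noncomputable def hWt {ι : Type*} {F : Type*} [Zero F] (u : ι → F) : ℕ :=
  Nat.card {i : ι | u i ≠ 0}

/-- For a linear code `C ⊆ F_q^n` and the concatenated code
`E(C) = { (φ(c̄_0), …, φ(c̄_{n-1})) : c ∈ C }`, the number of codewords `c ∈ C` with
`wt_b(c) = v` equals the number of `u ∈ E(C)` with `wt_H(u) = w·v`. -/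
theorem stmt3 (q b n N w v : ℕ) (hb : 0 < b) (hbn : b ≤ n) (hN : 0 < N) (hw : 0 < w)
    (F : Type*) [Field F] [Fintype F] (hF : Fintype.card F = q)
    (φ : (Fin b → F) →ₗ[F] (Fin N → F))
    (hφ : ∀ a : Fin b → F, a ≠ 0 → hWt (φ a) = w)
    (C : Submodule F (ZMod n → F)) :
    Nat.card {c : ZMod n → F // c ∈ C ∧ bWt b c = v}
      = Nat.card {u : ZMod n × Fin N → F //
          u ∈ (fun c : ZMod n → F => fun p : ZMod n × Fin N =>
                φ (fun j : Fin b => c (p.1 + ((j : ℕ) : ZMod n))) p.2) '' (C : Set (ZMod n → F))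
          ∧ hWt u = w * v} := by
  classical
  haveI : NeZero n := ⟨by omega⟩
  set E : (ZMod n → F) → (ZMod n × Fin N → F) :=
    fun c p => φ (fun j : Fin b => c (p.1 + ((j : ℕ) : ZMod n))) p.2 with hE
  have hφinj : Function.Injective φ := by
    intro a a' h
    by_contra hne
    have hsub : a - a' ≠ 0 := sub_ne_zero.mpr hne
    have h1 := hφ _ hsub
    have h2 : φ (a - a') = 0 := by rw [map_sub, h, sub_self]
    rw [h2] at h1
    simp [hWt] at h1
    omega
  have hEinj : Function.Injective E := by
    intro c c' h
    funext i
    have h2 : (fun j : Fin b => c (i + ((j : ℕ) : ZMod n)))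
        = fun j : Fin b => c' (i + ((j : ℕ) : ZMod n)) := by
      apply hφinj
      funext k
      exact congrFun h (i, k)
    have := congrFun h2 ⟨0, hb⟩
    simpa using this
  have hwt : ∀ c : ZMod n → F, hWt (E c) = w * bWt b c := by
    intro c
    have key : ∀ i : ZMod n,
        Fintype.card {k : Fin N // E c (i, k) ≠ 0}
          = if (∃ j < b, c (i + (j : ZMod n)) ≠ 0) then w else 0 := by
      intro i
      by_cases hc : (fun j : Fin b => c (i + ((j : ℕ) : ZMod n))) = 0
      · rw [if_neg]
        · have hz : ∀ k : Fin N, E c (i, k) = 0 := by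
            intro k; simp [hE, hc]
          simp [hz]
        · push_neg
          intro j hj
          have := congrFun hc ⟨j, hj⟩
          simpa using this
      · rw [if_pos]
        · have := hφ _ hc
          rw [hWt, Nat.card_eq_fintype_card] at this
          rw [← this]
          apply Fintype.card_congr
          exact Equiv.subtypeEquivRight (by intro k; simp [hE])
        · by_contra hcon
          push_neg at hcon
          apply hc
          funext j
          exact hcon j j.2
    rw [hWt, Nat.card_eq_fintype_card]
    have e : ↥{p : ZMod n × Fin N | E c p ≠ 0} ≃ Σ i : ZMod n, {k : Fin N // E c (i, k) ≠ 0} :=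
      (Equiv.subtypeEquivRight (fun x => by simp)).trans
        (Equiv.subtypeProdEquivSigmaSubtype (fun i k => E c (i, k) ≠ 0))
    rw [Fintype.card_congr e, Fintype.card_sigma]
    simp only [key]
    rw [Finset.sum_ite, Finset.sum_const, Finset.sum_const, smul_eq_mul, smul_eq_mul,
      mul_zero, add_zero, bWt, Nat.card_eq_fintype_card, Fintype.card_subtype, mul_comm]
    simp [Set.mem_setOf_eq]
  apply Nat.card_congr
  refine Equiv.ofBijective
    (fun c => ⟨E c.1, ⟨c.1, c.2.1, rfl⟩, by rw [hwt, c.2.2]⟩) ⟨?_, ?_⟩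
  · intro c c' h
    exact Subtype.ext (hEinj (congrArg Subtype.val h))
  · rintro ⟨u, ⟨c, hc, rfl⟩, hu⟩
    refine ⟨⟨c, hc, ?_⟩, rfl⟩
    have h3 := hwt c
    rw [hu] at h3
    exact (Nat.eq_of_mul_eq_mul_left hw h3).symm
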